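/- Let K be a field with char(K) ≠ 2,3, d ∈ K* a nonsquare or square, and suppose √d ∈ K̄. Let α ∈ K̄* with α³ ≠ 1, and set g(z) = α(z - √d)/(z + √d). Then g⁻¹ ∘ (1/z²) ∘ g equals the rational map (√d·μ·z² - 2dz + d√d·μ)/(z² - 2√d·μ·z + d), where μ = (α³+1)/(α³-1). -/

import Mathlib

/-- Conjugating φ(z) = 1/z² by g(z) = α(z - √d)/(z + √d) yields the map
(√d·μ·z² - 2dz + d√d·μ)/(z² - 2√d·μ·z + d) with μ = (α³+1)/(α³-1):
pointwise, g applied to the latter map equals 1/(g z)². -/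
theorem stmt11 (L : Type*) [Field L] (h2 : (2 : L) ≠ 0) (h3 : (3 : L) ≠ 0)
    (d s α : L) (hd : d ≠ 0) (hs : s ^ 2 = d) (hα : α ≠ 0) (hα3 : α ^ 3 ≠ 1)
    (μ : L) (hμ : μ = (α ^ 3 + 1) / (α ^ 3 - 1)) :
    ∀ z : L, z + s ≠ 0 → z - s ≠ 0 →
      z ^ 2 - 2 * s * μ * z + d ≠ 0 →
      (s * μ * z ^ 2 - 2 * d * z + d * s * μ) / (z ^ 2 - 2 * s * μ * z + d) + s ≠ 0 →
      α * ((s * μ * z ^ 2 - 2 * d * z + d * s * μ) / (z ^ 2 - 2 * s * μ * z + d) - s)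
          / ((s * μ * z ^ 2 - 2 * d * z + d * s * μ) / (z ^ 2 - 2 * s * μ * z + d) + s)
        = 1 / (α * (z - s) / (z + s)) ^ 2 := by
  intro z h1 h2' hQ hP
  have hα1 : α ^ 3 - 1 ≠ 0 := sub_ne_zero.mpr hα3
  have hs0 : s ≠ 0 := fun h => hd (by rw [← hs, h]; ring)
  subst hμ
  subst hs
  set N : L := s * ((α ^ 3 + 1) / (α ^ 3 - 1)) * z ^ 2 - 2 * s ^ 2 * z +
      s ^ 2 * s * ((α ^ 3 + 1) / (α ^ 3 - 1)) with hN
  set Q : L := z ^ 2 - 2 * s * ((α ^ 3 + 1) / (α ^ 3 - 1)) * z + s ^ 2 with hQdef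
  have e1 : N - s * Q = 2 * s * (z + s) ^ 2 / (α ^ 3 - 1) := by
    rw [hN, hQdef]; field_simp; ring
  have e2 : N + s * Q = 2 * s * α ^ 3 * (z - s) ^ 2 / (α ^ 3 - 1) := by
    rw [hN, hQdef]; field_simp; ring
  have hD : N + s * Q ≠ 0 := by
    rw [e2]
    exact div_ne_zero (mul_ne_zero (mul_ne_zero (mul_ne_zero h2 hs0)
      (pow_ne_zero 3 hα)) (pow_ne_zero 2 h2')) hα1
  have key : α * (N / Q - s) / (N / Q + s) = α * (N - s * Q) / (N + s * Q) := by
    rw [div_sub' hQ, div_add' _ _ _ hQ, ← mul_div_assoc, div_div_div_eq,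
      mul_comm Q (N + s * Q), mul_div_mul_right _ _ hQ, mul_comm Q s]
  rw [key, e1, e2]
  field_simp
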